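/- Let r ≥ 2 be an integer and t ≥ 0. Then s^{(r)}_{r^t + 1} = r^{2t+1} + 1 and (r + 1)·s^{(r)}_{r^t} = r^{2t+1} + 1; in particular s^{(r)}_{r^t+1} = (r+1)·s^{(r)}_{r^t}. -/

import Mathlib

/-- Moser function `m_r(n)`: reinterpret the base-`r` digits of `n` as base-`r²` digits,
i.e. `m_r(n) = Σ_i ν_i r^(2i)` where `n = Σ_i ν_i r^i` is the base-`r` expansion. -/
def moser (r n : ℕ) : ℕ := Nat.ofDigits (r ^ 2) (Nat.digits r n)

/-- `s^(r)_n = r · m_r(n−1) + 1` for `n ≥ 1`. -/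
def moserS (r n : ℕ) : ℕ := r * moser r (n - 1) + 1

/-- The `i`-th base-`r` digit of `n` (0 if beyond the expansion). -/
def dig (r n i : ℕ) : ℕ := (Nat.digits r n).getD i 0

/-- Josephus–Groër survivor function: with `M = N` if `N` is odd, `M = N − 1` otherwise,
and `M = Σ_j b_j 2^j` the binary expansion, `W(N) = 1 + Σ_{j odd} b_j 2^j`. -/
def W (N : ℕ) : ℕ :=
  let M := if N % 2 = 1 then N else N - 1
  1 + (((Nat.digits 2 M).zipIdx.filter (fun p => p.2 % 2 = 1)).map (fun p => p.1 * 2 ^ p.2)).sum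

lemma digits_one' (r : ℕ) (hr : 2 ≤ r) : Nat.digits r 1 = [1] := by
  rw [Nat.digits_def' (by omega : 1 < r) one_pos,
    Nat.mod_eq_of_lt (by omega), Nat.div_eq_of_lt (by omega)]
  simp

lemma moser_pow (r : ℕ) (hr : 2 ≤ r) : ∀ t, moser r (r ^ t) = r ^ (2 * t) := by
  intro t
  induction t with
  | zero => simp [moser, digits_one' r hr]
  | succ t ih =>
    have hpos : 0 < r ^ (t + 1) := pow_pos (by omega) _
    have hd : Nat.digits r (r ^ (t + 1)) = 0 :: Nat.digits r (r ^ t) := by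
      rw [Nat.digits_def' (by omega : 1 < r) hpos, pow_succ,
        Nat.mul_mod_left, Nat.mul_div_cancel _ (by omega : 0 < r)]
    rw [moser, hd, Nat.ofDigits_cons]
    rw [show Nat.ofDigits (r ^ 2) (Nat.digits r (r ^ t)) = moser r (r ^ t) from rfl, ih]
    ring

lemma moser_pred (r : ℕ) (hr : 2 ≤ r) :
    ∀ t, (r + 1) * moser r (r ^ t - 1) + 1 = r ^ (2 * t) := by
  intro t
  induction t with
  | zero => simp [moser]
  | succ t ih =>
    have h1 : 1 ≤ r ^ t := Nat.one_le_pow _ _ (by omega)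
    obtain ⟨k, hk⟩ : ∃ k, r ^ t = k + 1 := ⟨r ^ t - 1, by omega⟩
    have h5 : r ^ (t + 1) = r * k + r := by rw [pow_succ, hk]; ring
    have heq : r ^ (t + 1) - 1 = (r - 1) + r * (r ^ t - 1) := by
      rw [hk, Nat.add_sub_cancel, h5]; omega
    have hpos : 0 < r ^ (t + 1) - 1 := by omega
    have hd : Nat.digits r (r ^ (t + 1) - 1) = (r - 1) :: Nat.digits r (r ^ t - 1) := by
      rw [Nat.digits_def' (by omega : 1 < r) hpos, heq,
        Nat.add_mul_mod_self_left, Nat.mod_eq_of_lt (by omega),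
        Nat.add_mul_div_left _ _ (by omega : 0 < r), Nat.div_eq_of_lt (by omega)]
      simp
    have key : moser r (r ^ (t + 1) - 1) = (r - 1) + r ^ 2 * moser r (r ^ t - 1) := by
      rw [moser, hd, Nat.ofDigits_cons]; rfl
    have h3 : r ^ (2 * (t + 1)) = r ^ 2 * r ^ (2 * t) := by ring
    rw [key, h3, ← ih]
    obtain ⟨b, rfl⟩ : ∃ b, r = b + 1 := ⟨r - 1, by omega⟩
    rw [show b + 1 - 1 = b from rfl]
    ring

/-- For `r ≥ 2` and `t ≥ 0`: `s^(r)_{r^t+1} = r^(2t+1) + 1`,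
`(r+1)·s^(r)_{r^t} = r^(2t+1) + 1`, and hence `s^(r)_{r^t+1} = (r+1)·s^(r)_{r^t}`. -/
theorem moserS_power_values (r : ℕ) (hr : 2 ≤ r) (t : ℕ) :
    moserS r (r ^ t + 1) = r ^ (2 * t + 1) + 1 ∧
    (r + 1) * moserS r (r ^ t) = r ^ (2 * t + 1) + 1 ∧
    moserS r (r ^ t + 1) = (r + 1) * moserS r (r ^ t) := by
  have h1 : moserS r (r ^ t + 1) = r ^ (2 * t + 1) + 1 := by
    rw [moserS, Nat.add_sub_cancel, moser_pow r hr t, pow_succ]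
    ring
  have h2 : (r + 1) * moserS r (r ^ t) = r ^ (2 * t + 1) + 1 := by
    rw [moserS, show r ^ (2 * t + 1) = r * r ^ (2 * t) from by ring,
      ← moser_pred r hr t]
    ring
  exact ⟨h1, h2, by omega⟩
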